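/- If U is a finite inconsistent universal first-order theory (i.e., U has no model), then there exists a Herbrand tree for U: a finite binary tree whose inner nodes are labeled with atomic formulas and whose leaves are labeled with ground instances of axioms of U, such that along every branch, the partial truth assignment to atoms determined by the branch (true when descending left, false when descending right) falsifies the quantifier-free formula at the leaf. -/

import Mathlib

inductive Compound (atom : Type) : Type where
  | Atomic : atom → Compound atom
  | And : Compound atom → Compound atom → Compound atom
  | Or : Compound atom → Compound atom → Compound atom
  | Not : Compound atom → Compound atom

variable {atom index : Type}

/-- Total Boolean evaluation of a compound. -/
def cEval (val : atom → Bool) : Compound atom → Bool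
  | .Atomic a => val a
  | .And c d => cEval val c && cEval val d
  | .Or c d => cEval val c || cEval val d
  | .Not c => !cEval val c

/-- A path is a finite partial Boolean valuation on atoms. -/
abbrev PPath (atom : Type) : Type := List (atom × Bool)

/-- Lookup of an atom in a path. -/
def findA [DecidableEq atom] (p : PPath atom) (a : atom) : Option Bool :=
  (p.find? (fun x => x.1 = a)).map Prod.snd

/-- Strict partial evaluation of a compound under a path. -/
def pEval [DecidableEq atom] (p : PPath atom) : Compound atom → Option Bool
  | .Atomic a => findA p a
  | .And c d =>
      match pEval p c, pEval p d with
      | some x, some y => some (x && y)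
      | _, _ => none
  | .Or c d =>
      match pEval p c, pEval p d with
      | some x, some y => some (x || y)
      | _, _ => none
  | .Not c => (pEval p c).map (fun b => !b)

/-- The list of atoms occurring in a compound. -/
def atomsOf : Compound atom → List atom
  | .Atomic a => [a]
  | .And c d => atomsOf c ++ atomsOf d
  | .Or c d => atomsOf c ++ atomsOf d
  | .Not c => atomsOf c

/-- Herbrand trees: leaves carry indices, nodes carry atoms. -/
inductive HTree (atom index : Type) : Type where
  | Contrad : index → HTree atom index
  | Exp : atom → HTree atom index → HTree atom index → HTree atom index

/-- Checker that `t` is a correct Herbrand tree relative to a starting path `p`. -/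
def HtreeAt [DecidableEq atom] (Th : index → Compound atom) (p : PPath atom) :
    HTree atom index → Bool
  | .Contrad i => pEval p (Th i) == some false
  | .Exp a t₁ t₂ =>
      (findA p a == none) && HtreeAt Th ((a, true) :: p) t₁
        && HtreeAt Th ((a, false) :: p) t₂

/-- Checker that `t` is a Herbrand tree for the theory `Th`. -/
def Htree [DecidableEq atom] (Th : index → Compound atom) (t : HTree atom index) : Bool :=
  HtreeAt Th [] t

/-- `q` extends `p` as a partial valuation. -/
def PathExtends [DecidableEq atom] (q p : PPath atom) : Prop :=
  ∀ a b, findA p a = some b → findA q a = some b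

/-- A total valuation `val` extends the path `p`. -/
def ValExtends [DecidableEq atom] (val : atom → Bool) (p : PPath atom) : Prop :=
  ∀ a b, findA p a = some b → val a = b

/-- The `good` predicate: reflects the existence of a Herbrand sub-tree below `p`. -/
inductive good [DecidableEq atom] (Th : index → Compound atom) : PPath atom → Prop where
  | good_leaf : ∀ p i, pEval p (Th i) = some false → good Th p
  | good_node : ∀ p a, findA p a = none → good Th ((a, true) :: p) →
      good Th ((a, false) :: p) → good Th p

/-- Evaluation of a compound in a `Prop`-valued interpretation. -/
def propEval (val : atom → Prop) : Compound atom → Prop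
  | .Atomic a => val a
  | .And c d => propEval val c ∧ propEval val d
  | .Or c d => propEval val c ∨ propEval val d
  | .Not c => ¬ propEval val c

section Aux

variable [DecidableEq atom] {Th : index → Compound atom}

lemma findA_cons (x : atom) (b : Bool) (p : PPath atom) (a : atom) :
    findA ((x, b) :: p) a = if x = a then some b else findA p a := by
  simp only [findA, List.find?]
  by_cases h : x = a <;> simp [h]

lemma findA_mem {p : PPath atom} {a : atom} {b : Bool} (h : findA p a = some b) :
    (a, b) ∈ p := by
  simp only [findA, Option.map_eq_some_iff] at h
  obtain ⟨x, hx, hb⟩ := h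
  have hmem := List.mem_of_find?_eq_some hx
  have hpred := List.find?_some hx
  simp at hpred
  cases x; simp_all

lemma pEval_mono {p q : PPath atom} (hpq : PathExtends q p) :
    ∀ (c : Compound atom) (b : Bool), pEval p c = some b → pEval q c = some b := by
  intro c
  induction c with
  | Atomic a => exact fun b h => hpq a b h
  | And c d ihc ihd =>
    intro b h
    simp only [pEval] at h ⊢
    cases hc : pEval p c with
    | none => rw [hc] at h; simp at h
    | some x =>
      cases hd : pEval p d with
      | none => rw [hc, hd] at h; simp at h
      | some y =>
        rw [hc, hd] at h
        rw [ihc x hc, ihd y hd]; exact h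
  | Or c d ihc ihd =>
    intro b h
    simp only [pEval] at h ⊢
    cases hc : pEval p c with
    | none => rw [hc] at h; simp at h
    | some x =>
      cases hd : pEval p d with
      | none => rw [hc, hd] at h; simp at h
      | some y =>
        rw [hc, hd] at h
        rw [ihc x hc, ihd y hd]; exact h
  | Not c ihc =>
    intro b h
    simp only [pEval, Option.map_eq_some_iff] at h ⊢
    obtain ⟨x, hx, hb⟩ := h
    exact ⟨x, ihc x hx, hb⟩

lemma good_mono {p : PPath atom} (h : good Th p) :
    ∀ q, PathExtends q p → good Th q := by
  induction h with
  | good_leaf p i hpe =>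
    intro q hq
    exact good.good_leaf q i (pEval_mono hq _ _ hpe)
  | good_node p a hna _ _ ih1 ih2 =>
    intro q hq
    cases hqa : findA q a with
    | none =>
      refine good.good_node q a hqa (ih1 _ ?_) (ih2 _ ?_) <;>
      · intro x b hx
        rw [findA_cons] at hx ⊢
        by_cases hax : a = x
        · simpa [hax] using hx
        · simp only [hax, if_false] at hx ⊢
          exact hq x b hx
    | some b =>
      cases b
      · apply ih2 q
        intro x bb hx
        rw [findA_cons] at hx
        by_cases hax : a = x
        · subst hax; simp at hx; subst hx; exact hqa
        · simp only [hax, if_false] at hx; exact hq x bb hx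
      · apply ih1 q
        intro x bb hx
        rw [findA_cons] at hx
        by_cases hax : a = x
        · subst hax; simp at hx; subst hx; exact hqa
        · simp only [hax, if_false] at hx; exact hq x bb hx

lemma good_tree {p : PPath atom} (h : good Th p) :
    ∃ t : HTree atom index, HtreeAt Th p t = true := by
  induction h with
  | good_leaf p i hpe =>
    exact ⟨.Contrad i, by simp [HtreeAt, hpe]⟩
  | good_node p a hna _ _ ih1 ih2 =>
    obtain ⟨t1, ht1⟩ := ih1
    obtain ⟨t2, ht2⟩ := ih2
    exact ⟨.Exp a t1 t2, by simp [HtreeAt, hna, ht1, ht2]⟩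

lemma pEval_defined {p : PPath atom} {val : atom → Bool} :
    ∀ c : Compound atom, (∀ a ∈ atomsOf c, findA p a = some (val a)) →
      pEval p c = some (cEval val c) := by
  intro c
  induction c with
  | Atomic a => intro h; simpa [pEval, cEval] using h a (by simp [atomsOf])
  | And c d ihc ihd =>
    intro h
    have hc := ihc fun a ha => h a (by simp [atomsOf, ha])
    have hd := ihd fun a ha => h a (by simp [atomsOf, ha])
    simp [pEval, cEval, hc, hd]
  | Or c d ihc ihd =>
    intro h
    have hc := ihc fun a ha => h a (by simp [atomsOf, ha])
    have hd := ihd fun a ha => h a (by simp [atomsOf, ha])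
    simp [pEval, cEval, hc, hd]
  | Not c ihc =>
    intro h
    have hc := ihc fun a ha => h a (by simp [atomsOf, ha])
    simp [pEval, cEval, hc]

lemma propEval_iff {val : atom → Bool} :
    ∀ c : Compound atom, propEval (fun a => val a = true) c ↔ cEval val c = true := by
  intro c
  induction c with
  | Atomic a => simp [propEval, cEval]
  | And c d ihc ihd => simp [propEval, cEval, ihc, ihd]
  | Or c d ihc ihd => simp [propEval, cEval, ihc, ihd]
  | Not c ihc => simp [propEval, cEval, ihc]

lemma findA_filter_ne (p : PPath atom) (a x : atom) (hx : x ≠ a) :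
    findA (p.filter (fun y => y.1 ≠ a)) x = findA p x := by
  induction p with
  | nil => rfl
  | cons y p ih =>
    obtain ⟨c, b⟩ := y
    by_cases hca : c = a
    · subst hca
      rw [List.filter_cons_of_neg (by simp), ih, findA_cons]
      simp [Ne.symm hx]
    · rw [List.filter_cons_of_pos (by simp [hca]), findA_cons, findA_cons, ih]

lemma findA_filter_self (p : PPath atom) (a : atom) :
    findA (p.filter (fun y => y.1 ≠ a)) a = none := by
  induction p with
  | nil => rfl
  | cons y p ih =>
    obtain ⟨c, b⟩ := y
    by_cases hca : c = a
    · rw [List.filter_cons_of_neg (by simp [hca])]; exact ih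
    · rw [List.filter_cons_of_pos (by simp [hca]), findA_cons, if_neg hca]
      exact ih

lemma findA_append (p q : PPath atom) (x : atom) :
    findA (p ++ q) x = (findA p x).or (findA q x) := by
  induction p with
  | nil => simp [findA]
  | cons y p ih =>
    obtain ⟨c, b⟩ := y
    by_cases hcx : c = x <;> simp [findA_cons, hcx, ih]

lemma findA_map_graph (l : List atom) (f : atom → Bool) (x : atom) :
    findA (l.map (fun a => (a, f a))) x = if x ∈ l then some (f x) else none := by
  induction l with
  | nil => simp [findA]
  | cons a l ih =>
    by_cases hax : a = x
    · subst hax; simp [findA_cons]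
    · have hxa : ¬ x = a := fun h => hax h.symm
      simp [findA_cons, hax, ih, hxa]

lemma chain_pick (c : Set (Set (atom × Bool))) (hc : IsChain (· ⊆ ·) c)
    (hne : c.Nonempty) (l : List (atom × Bool)) :
    ∃ s ∈ c, ∀ x ∈ l, x ∈ ⋃₀ c → x ∈ s := by
  induction l with
  | nil => obtain ⟨s, hs⟩ := hne; exact ⟨s, hs, by simp⟩
  | cons y l ih =>
    obtain ⟨s, hs, h⟩ := ih
    by_cases hy : y ∈ ⋃₀ c
    · obtain ⟨s', hs', hys'⟩ := hy
      rcases hc.total hs hs' with h1 | h1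
      · refine ⟨s', hs', fun x hx => ?_⟩
        rcases List.mem_cons.mp hx with rfl | hx
        · exact fun _ => hys'
        · exact fun hxu => h1 (h x hx hxu)
      · refine ⟨s, hs, fun x hx => ?_⟩
        rcases List.mem_cons.mp hx with rfl | hx
        · exact fun _ => h1 hys'
        · exact h x hx
    · refine ⟨s, hs, fun x hx => ?_⟩
      rcases List.mem_cons.mp hx with rfl | hx
      · exact fun hxu => absurd hxu hy
      · exact h x hx

end Aux
/-- Herbrand's theorem for an inconsistent universal theory. -/
theorem herbrand_prop {atom index : Type} [DecidableEq atom]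
    (Th : index → Compound atom)
    (hU : ∀ val : atom → Prop, ¬ (∀ i : index, propEval val (Th i))) :
    ∃ t : HTree atom index, Htree Th t = true := by
  rcases Classical.em (good Th []) with hg | hbad
  · exact good_tree hg
  exfalso
  -- Zorn's lemma setup
  set S : Set (Set (atom × Bool)) :=
    {s | (∀ a b b', (a, b) ∈ s → (a, b') ∈ s → b = b') ∧
         ∀ p : PPath atom, (∀ a b, findA p a = some b → (a, b) ∈ s) → ¬ good Th p} with hS
  have hempty : (∅ : Set (atom × Bool)) ∈ S := by
    constructor
    · intro a b b' h; exact absurd h (Set.notMem_empty _)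
    · intro p hp
      cases p with
      | nil => exact hbad
      | cons y p =>
        obtain ⟨a, b⟩ := y
        exact absurd (hp a b (by rw [findA_cons]; simp)) (Set.notMem_empty _)
  have hzorn : ∃ m, ∅ ⊆ m ∧ Maximal (· ∈ S) m := by
    apply zorn_subset_nonempty S ?_ ∅ hempty
    intro c hcS hchain hcne
    refine ⟨⋃₀ c, ⟨?_, ?_⟩, fun s hs => Set.subset_sUnion_of_mem hs⟩
    · intro a b b' hb hb'
      obtain ⟨s, hs, hbs⟩ := hb
      obtain ⟨s', hs', hbs'⟩ := hb'
      rcases hchain.total hs hs' with h1 | h1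
      · exact (hcS hs').1 a b b' (h1 hbs) hbs'
      · exact (hcS hs).1 a b b' hbs (h1 hbs')
    · intro p hp
      obtain ⟨s, hs, h⟩ := chain_pick c hchain hcne p
      apply (hcS hs).2 p
      intro a b hab
      exact h (a, b) (findA_mem hab) (hp a b hab)
  obtain ⟨m, -, hm⟩ := hzorn
  obtain ⟨⟨hfun, hpath⟩, hmax⟩ := hm
  -- m is total
  have htotal : ∀ a : atom, ∃ b, (a, b) ∈ m := by
    intro a
    by_contra hna
    push_neg at hna
    -- for each b, m ∪ {(a,b)} is not in S
    have hnot : ∀ b : Bool, ∃ p : PPath atom,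
        (∀ x c, findA p x = some c → (x, c) ∈ m ∪ {(a, b)}) ∧ good Th p := by
      intro b
      by_contra hcon
      push_neg at hcon
      have hmem : m ∪ {(a, b)} ∈ S := by
        constructor
        · intro x c c' hc hc'
          rcases hc with hc | hc <;> rcases hc' with hc' | hc'
          · exact hfun x c c' hc hc'
          · simp at hc'; exact absurd (hc'.1 ▸ hc) (hna c)
          · simp at hc; exact absurd (hc.1 ▸ hc') (hna c')
          · simp at hc hc'; rw [hc.2, hc'.2]
        · intro p hp hgood
          exact absurd hgood (hcon p hp)
      have := hmax hmem (Set.subset_union_left)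
      have : (a, b) ∈ m := this (Or.inr rfl)
      exact hna b this
    obtain ⟨pt, hpt, hgt⟩ := hnot true
    obtain ⟨pf, hpf, hgf⟩ := hnot false
    -- merge paths
    set q : PPath atom := pt.filter (fun y => y.1 ≠ a) ++ pf.filter (fun y => y.1 ≠ a) with hq
    have hq_sub : ∀ x c, findA q x = some c → (x, c) ∈ m := by
      intro x c hxc
      by_cases hxa : x = a
      · subst hxa
        rw [hq, findA_append, findA_filter_self, findA_filter_self] at hxc
        simp at hxc
      · rw [hq, findA_append, findA_filter_ne _ _ _ hxa, findA_filter_ne _ _ _ hxa] at hxc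
        rcases Option.or_eq_some_iff.mp hxc with h1 | ⟨h1, h2⟩
        · rcases hpt x c h1 with h | h
          · exact h
          · simp at h; exact absurd h.1 hxa
        · rcases hpf x c h2 with h | h
          · exact h
          · simp at h; exact absurd h.1 hxa
    have hqa : findA q a = none := by
      rw [hq, findA_append, findA_filter_self, findA_filter_self]; rfl
    have hgt' : good Th ((a, true) :: q) := by
      apply good_mono hgt
      intro x c hxc
      rw [findA_cons]
      by_cases hax : a = x
      · subst hax
        rcases hpt a c hxc with h | h
        · exact absurd h (hna c)
        · simp at h; simp [h]
      · simp only [hax, if_false]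
        have hxa : x ≠ a := fun h => hax h.symm
        rw [hq, findA_append, findA_filter_ne _ _ _ hxa, hxc]; rfl

    have hgf' : good Th ((a, false) :: q) := by
      apply good_mono hgf
      intro x c hxc
      rw [findA_cons]
      by_cases hax : a = x
      · subst hax
        rcases hpf a c hxc with h | h
        · exact absurd h (hna c)
        · simp at h; simp [h]
      · simp only [hax, if_false]
        have hxa : x ≠ a := fun h => hax h.symm
        rw [hq, findA_append, findA_filter_ne _ _ _ hxa, findA_filter_ne _ _ _ hxa]
        cases hfind : findA pt x with
        | none => simp [hxc]
        | some c' =>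
          have h1 : (x, c') ∈ m := by
            rcases hpt x c' hfind with h | h
            · exact h
            · simp at h; exact absurd h.1 hxa
          have h2 : (x, c) ∈ m := by
            rcases hpf x c hxc with h | h
            · exact h
            · simp at h; exact absurd h.1 hxa
          simp [hfun x c' c h1 h2]
    exact hpath q hq_sub (good.good_node q a hqa hgt' hgf')
  -- build total valuation
  set val : atom → Bool := fun a => Classical.choose (htotal a) with hval
  have hvalm : ∀ a, (a, val a) ∈ m := fun a => Classical.choose_spec (htotal a)
  apply hU (fun a => val a = true)
  intro i
  rw [propEval_iff]
  set p : PPath atom := (atomsOf (Th i)).dedup.map (fun a => (a, val a)) with hp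
  have hpm : ∀ x c, findA p x = some c → (x, c) ∈ m := by
    intro x c hxc
    rw [hp, findA_map_graph] at hxc
    split at hxc
    · cases hxc; exact hvalm x
    · exact absurd hxc (by simp)
  have hbadp : ¬ good Th p := hpath p hpm
  have hdef : pEval p (Th i) = some (cEval val (Th i)) := by
    apply pEval_defined
    intro a ha
    rw [hp, findA_map_graph]
    simp [List.mem_dedup, ha]
  by_contra hfalse
  rw [Bool.not_eq_true] at hfalse
  rw [hfalse] at hdef
  exact hbadp (good.good_leaf p i hdef)
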